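/- arXiv:2603.17313 — 2 statements merged into one kernel-verified Lean document; each statement's English description precedes it below -/
import Mathlib

section
/- For every integer n and 0 < ε < 1/2 and every angle ϑ_y, the integral (-(1-ε)ε/π) ∫_{-π}^{π} e^{-inϑ} dϑ / ((1-2ε)cos(ϑ - ϑ_y) + 2(1-ε)ε - 1) equals (1-2ε)^{|n|} e^{-inϑ_y}. -/
open intervalIntegral Real Complex Finset

lemma int_char (k : ℤ) :
    (∫ θ : ℝ in (-π)..π, Complex.exp ((k : ℂ) * Complex.I * θ))
      = if k = 0 then (2 * π : ℂ) else 0 := by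
  rcases eq_or_ne k 0 with rfl | hk
  · simp [two_mul]
  · rw [if_neg hk]
    have hc : (k : ℂ) * Complex.I ≠ 0 := by
      simp [Complex.ext_iff, hk]
    rw [integral_exp_mul_complex hc]
    have : Complex.exp ((k:ℂ) * Complex.I * (π:ℝ)) = Complex.exp ((k:ℂ) * Complex.I * ((-π : ℝ):ℝ)) := by
      rw [Complex.exp_eq_exp_iff_exists_int]
      refine ⟨k, ?_⟩
      push_cast
      ring
    rw [this]
    simp

lemma geom_int (r : ℝ) (hr0 : 0 ≤ r) (hr1 : r < 1) (m : ℤ) :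
    (∫ θ : ℝ in (-π)..π,
        Complex.exp ((m:ℂ) * Complex.I * θ) / (1 - (r:ℂ) * Complex.exp (Complex.I * θ)))
      = if m ≤ 0 then (r:ℂ)^(-m).toNat * (2*π) else 0 := by
  set I₀ := Complex.I
  have hnorm : ∀ θ : ℝ, ‖(r:ℂ) * Complex.exp (Complex.I * θ)‖ = r := by
    intro θ
    rw [norm_mul, Complex.norm_exp]
    simp [abs_of_nonneg hr0]
  have hden : ∀ θ : ℝ, (1 : ℂ) - (r:ℂ) * Complex.exp (Complex.I * θ) ≠ 0 := by
    intro θ h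
    have h2 : (1:ℂ) = (r:ℂ) * Complex.exp (Complex.I * θ) := by linear_combination h
    have := hnorm θ
    rw [← h2] at this
    simp at this
    linarith
  -- continuity of integrands
  have hcont : ∀ c : ℂ, Continuous fun θ : ℝ =>
      Complex.exp (c * θ) / (1 - (r:ℂ) * Complex.exp (Complex.I * θ)) := by
    intro c
    apply Continuous.div
    · exact Complex.continuous_exp.comp (continuous_const.mul Complex.continuous_ofReal)
    · exact (continuous_const.sub (continuous_const.mul
        (Complex.continuous_exp.comp (continuous_const.mul Complex.continuous_ofReal))))
    · exact fun θ => hden θ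
  set T : ℕ → ℂ := fun M => ∫ θ : ℝ in (-π)..π,
      Complex.exp (((m + M + 1 : ℤ) : ℂ) * Complex.I * θ) /
        (1 - (r:ℂ) * Complex.exp (Complex.I * θ)) with hT
  set c : ℂ := if m ≤ 0 then (r:ℂ)^(-m).toNat * (2*π) else 0 with hc
  set J : ℂ := ∫ θ : ℝ in (-π)..π,
      Complex.exp ((m:ℂ) * Complex.I * θ) / (1 - (r:ℂ) * Complex.exp (Complex.I * θ)) with hJ
  show J = c
  have hpt : ∀ (M : ℕ) (θ : ℝ),
      Complex.exp ((m:ℂ) * Complex.I * θ) / (1 - (r:ℂ) * Complex.exp (Complex.I * θ))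
        = (∑ k ∈ range (M+1), (r:ℂ)^k * Complex.exp (((m + k : ℤ):ℂ) * Complex.I * θ))
          + (r:ℂ)^(M+1) * (Complex.exp (((m + M + 1 : ℤ):ℂ) * Complex.I * θ) /
              (1 - (r:ℂ) * Complex.exp (Complex.I * θ))) := by
    intro M θ
    have ha0 := hden θ
    have hak : ∀ k : ℕ, Complex.exp (((m + k : ℤ):ℂ) * Complex.I * θ)
        = Complex.exp ((m:ℂ) * Complex.I * θ) * Complex.exp (Complex.I * θ) ^ k := by
      intro k
      rw [← Complex.exp_nat_mul, ← Complex.exp_add]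
      push_cast
      ring_nf
    have hsum : ∑ k ∈ range (M+1), (r:ℂ)^k * Complex.exp (((m + k : ℤ):ℂ) * Complex.I * θ)
        = Complex.exp ((m:ℂ) * Complex.I * θ)
            * ∑ k ∈ range (M+1), ((r:ℂ) * Complex.exp (Complex.I * θ))^k := by
      rw [Finset.mul_sum]
      refine Finset.sum_congr rfl fun k _ => ?_
      rw [hak k, mul_pow]
      ring
    have htail : (r:ℂ)^(M+1) * Complex.exp (((m:ℂ) + M + 1) * Complex.I * θ)
        = Complex.exp ((m:ℂ) * Complex.I * θ)
            * ((r:ℂ) * Complex.exp (Complex.I * θ))^(M+1) := by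
      have h := hak (M+1)
      push_cast at h
      rw [show ((m:ℂ) + ((M:ℂ)+1)) = (m:ℂ) + (M:ℂ) + 1 by ring] at h
      rw [h, mul_pow]
      ring
    rw [hsum]
    push_cast
    rw [← mul_div_assoc, htail]
    generalize hA : (r:ℂ) * Complex.exp (Complex.I * θ) = a at ha0 ⊢
    have hgeom := geom_sum_mul a (M+1)
    rw [div_eq_iff ha0, add_mul, div_mul_cancel₀ _ ha0]
    linear_combination Complex.exp ((m:ℂ) * Complex.I * θ) * hgeom
  have key : ∀ M : ℕ, J = (∑ k ∈ range (M+1), (r:ℂ)^k *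
      (if (m + k : ℤ) = 0 then (2*π:ℂ) else 0)) + (r:ℂ)^(M+1) * T M := by
    intro M
    have h1 : J = ∫ θ : ℝ in (-π)..π,
        ((∑ k ∈ range (M+1), (r:ℂ)^k * Complex.exp (((m + k : ℤ):ℂ) * Complex.I * θ))
          + (r:ℂ)^(M+1) * (Complex.exp (((m + M + 1 : ℤ):ℂ) * Complex.I * θ) /
              (1 - (r:ℂ) * Complex.exp (Complex.I * θ)))) := by
      rw [hJ]
      exact intervalIntegral.integral_congr fun θ _ => hpt M θ
    rw [h1, intervalIntegral.integral_add, intervalIntegral.integral_finset_sum,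
        intervalIntegral.integral_const_mul]
    · congr 1
      refine Finset.sum_congr rfl fun k _ => ?_
      rw [intervalIntegral.integral_const_mul, int_char (m+k)]
    · intro k _
      exact (continuous_const.mul (Complex.continuous_exp.comp
        (continuous_const.mul Complex.continuous_ofReal))).intervalIntegrable _ _
    · apply Continuous.intervalIntegrable
      exact continuous_finset_sum _ fun k _ =>
        continuous_const.mul (Complex.continuous_exp.comp
          (continuous_const.mul Complex.continuous_ofReal))
    · exact (continuous_const.mul (hcont _)).intervalIntegrable _ _
  have hTbound : ∀ M : ℕ, ‖T M‖ ≤ (1/(1-r)) * (2*π) := by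
    intro M
    have := intervalIntegral.norm_integral_le_of_norm_le_const (C := 1/(1-r))
      (f := fun θ : ℝ => Complex.exp (((m + M + 1 : ℤ):ℂ) * Complex.I * θ) /
        (1 - (r:ℂ) * Complex.exp (Complex.I * θ))) (a := -π) (b := π) ?_
    · calc ‖T M‖ ≤ 1/(1-r) * |π - (-π)| := this
        _ = 1/(1-r) * (2*π) := by
          rw [_root_.abs_of_nonneg (by simp; positivity : (0:ℝ) ≤ π - (-π))]; ring
    · intro θ _
      rw [norm_div]
      have he : ‖Complex.exp (((m + M + 1 : ℤ):ℂ) * Complex.I * θ)‖ = 1 := by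
        rw [Complex.norm_exp]
        simp
      rw [he]
      have h1a : 1 - r ≤ ‖(1:ℂ) - (r:ℂ) * Complex.exp (Complex.I * θ)‖ := by
        have := norm_sub_norm_le (1:ℂ) ((r:ℂ) * Complex.exp (Complex.I * θ))
        rw [hnorm θ] at this
        simpa using this
      rw [div_le_div_iff₀ (norm_pos_iff.2 (hden θ)) (by linarith)]
      linarith
  have hsumc : ∀ M : ℕ, (-m).toNat ≤ M →
      (∑ k ∈ range (M+1), (r:ℂ)^k * (if (m + k : ℤ) = 0 then (2*π:ℂ) else 0)) = c := by
    intro M hM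
    by_cases hm : m ≤ 0
    · rw [hc, if_pos hm, Finset.sum_eq_single ((-m).toNat)]
      · rw [if_pos (by omega)]
      · intro k _ hk
        rw [if_neg (by omega), mul_zero]
      · intro h
        exact absurd (Finset.mem_range.2 (by omega)) h
    · rw [hc, if_neg hm]
      apply Finset.sum_eq_zero
      intro k _
      rw [if_neg (by omega), mul_zero]
  have hdiff : ∀ M : ℕ, (-m).toNat ≤ M → ‖J - c‖ ≤ (1/(1-r)) * (2*π) * r^(M+1) := by
    intro M hM
    rw [key M, hsumc M hM, add_sub_cancel_left, norm_mul]
    have h1 : ‖(r:ℂ)^(M+1)‖ = r^(M+1) := by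
      rw [norm_pow, Complex.norm_real, Real.norm_of_nonneg hr0]
    rw [h1]
    calc r^(M+1) * ‖T M‖ ≤ r^(M+1) * ((1/(1-r)) * (2*π)) := by
          apply mul_le_mul_of_nonneg_left (hTbound M) (by positivity)
      _ = (1/(1-r)) * (2*π) * r^(M+1) := by ring
  have htend : Filter.Tendsto (fun M : ℕ => (1/(1-r)) * (2*π) * r^(M+1)) Filter.atTop (nhds 0) := by
    rw [show (0:ℝ) = (1/(1-r)) * (2*π) * 0 by ring]
    exact (((tendsto_pow_atTop_nhds_zero_of_lt_one hr0 hr1).comp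
      (Filter.tendsto_add_atTop_nat 1))).const_mul _
  have : ‖J - c‖ ≤ 0 := by
    refine ge_of_tendsto htend ?_
    filter_upwards [Filter.eventually_ge_atTop ((-m).toNat)] with M hM
    exact hdiff M hM
  have : J - c = 0 := by
    have := norm_nonneg (J - c)
    have h0 : ‖J - c‖ = 0 := le_antisymm ‹‖J - c‖ ≤ 0› this
    exact norm_eq_zero.1 h0
  exact sub_eq_zero.1 this

lemma core (r : ℝ) (hr0 : 0 < r) (hr1 : r < 1) (n : ℤ) :
    (∫ u : ℝ in (-π)..π, Complex.exp (-(n:ℂ) * Complex.I * u) /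
        (((r * Real.cos u - (1 + r^2)/2 : ℝ)) : ℂ))
      = (-2/(1-(r:ℂ)^2)) * ((r:ℂ)^n.natAbs * (2*π)) := by
  have hnorm : ∀ θ : ℝ, ‖(r:ℂ) * Complex.exp (Complex.I * θ)‖ = r := by
    intro θ
    rw [norm_mul, Complex.norm_exp]
    simp [abs_of_nonneg hr0.le]
  have hden : ∀ θ : ℝ, (1 : ℂ) - (r:ℂ) * Complex.exp (Complex.I * θ) ≠ 0 := by
    intro θ h
    have h2 : (1:ℂ) = (r:ℂ) * Complex.exp (Complex.I * θ) := by linear_combination h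
    have := hnorm θ
    rw [← h2] at this
    simp at this
    linarith
  have hr2 : (1:ℂ) - (r:ℂ)^2 ≠ 0 := by
    intro h
    have : ((1 - r^2 : ℝ) : ℂ) = 0 := by push_cast; linear_combination h
    rw [Complex.ofReal_eq_zero] at this
    nlinarith
  have hdenR : ∀ u : ℝ, (r * Real.cos u - (1 + r^2)/2 : ℝ) ≠ 0 := by
    intro u
    have h1 := Real.cos_le_one u
    have h2 := Real.neg_one_le_cos u
    nlinarith
  -- pointwise identity
  have hpt : ∀ u : ℝ,
      Complex.exp (-(n:ℂ) * Complex.I * u) / (((r * Real.cos u - (1 + r^2)/2 : ℝ)) : ℂ)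
        = (-2/(1-(r:ℂ)^2)) *
            (Complex.exp (-(n:ℂ) * Complex.I * u) / (1 - (r:ℂ) * Complex.exp (Complex.I * u))
              + Complex.exp (-(n:ℂ) * Complex.I * u) / (1 - (r:ℂ) * Complex.exp (-(Complex.I * u)))
              - Complex.exp (-(n:ℂ) * Complex.I * u)) := by
    intro u
    have hE : Complex.exp (Complex.I * u) * Complex.exp (-(Complex.I * u)) = 1 := by
      rw [← Complex.exp_add]
      simp
    have h1 : Complex.exp (Complex.I * (u:ℂ)) = Complex.cos u + Complex.sin u * Complex.I := by
      rw [mul_comm]; exact Complex.exp_mul_I _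
    have h2 : Complex.exp (-(Complex.I * (u:ℂ))) = Complex.cos u - Complex.sin u * Complex.I := by
      rw [show -(Complex.I * (u:ℂ)) = (-(u:ℂ)) * Complex.I by ring, Complex.exp_mul_I,
          Complex.cos_neg, Complex.sin_neg]
      ring
    have hcos : Complex.exp (Complex.I * u) + Complex.exp (-(Complex.I * u))
        = 2 * Complex.cos u := by
      rw [h1, h2]
      ring
    have hdenc : ((r * Real.cos u - (1 + r^2)/2 : ℝ) : ℂ)
        = -((1 - (r:ℂ) * Complex.exp (Complex.I * u))
            * (1 - (r:ℂ) * Complex.exp (-(Complex.I * u))))/2 := by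
      push_cast
      linear_combination (-(r:ℂ)/2) * hcos + ((r:ℂ)^2/2) * hE
    have hA := hden u
    have hB : (1:ℂ) - (r:ℂ) * Complex.exp (-(Complex.I * u)) ≠ 0 := by
      have := hden (-u : ℝ)
      push_cast at this
      rw [show Complex.I * -(u:ℂ) = -(Complex.I * u) by ring] at this
      exact this
    have hrC : (r:ℂ) ≠ 0 := Complex.ofReal_ne_zero.2 hr0.ne'
    have hEne := Complex.exp_ne_zero (Complex.I * (u:ℂ))
    have hErne : Complex.exp (Complex.I * (u:ℂ)) - (r:ℂ) ≠ 0 := by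
      intro h
      apply hB
      have hEr : Complex.exp (Complex.I * (u:ℂ)) = (r:ℂ) := by linear_combination h
      rw [Complex.exp_neg, hEr, mul_inv_cancel₀ hrC, sub_self]
    rw [Complex.exp_neg] at hB
    rw [hdenc, Complex.exp_neg]
    field_simp
    ring
  have hBden : ∀ u : ℝ, (1:ℂ) - (r:ℂ) * Complex.exp (-(Complex.I * (u:ℂ))) ≠ 0 := by
    intro u
    have := hden (-u : ℝ)
    push_cast at this
    rw [show Complex.I * -(u:ℂ) = -(Complex.I * (u:ℂ)) by ring] at this
    exact this
  have hcE : ∀ c : ℂ, Continuous fun u : ℝ => Complex.exp (c * u) :=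
    fun c => Complex.continuous_exp.comp (continuous_const.mul Complex.continuous_ofReal)
  have hcont1 : Continuous fun u : ℝ =>
      Complex.exp (-(n:ℂ) * Complex.I * u) / (1 - (r:ℂ) * Complex.exp (Complex.I * u)) := by
    exact Continuous.div (by simpa [mul_assoc] using hcE (-(n:ℂ) * Complex.I))
      (continuous_const.sub (continuous_const.mul (by simpa [mul_assoc] using hcE Complex.I)))
      hden
  have hcont2 : Continuous fun u : ℝ =>
      Complex.exp (-(n:ℂ) * Complex.I * u) / (1 - (r:ℂ) * Complex.exp (-(Complex.I * u))) := by
    refine Continuous.div (by simpa [mul_assoc] using hcE (-(n:ℂ) * Complex.I))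
      (continuous_const.sub (continuous_const.mul ?_)) hBden
    have := hcE (-Complex.I)
    simpa [mul_assoc, neg_mul] using this
  have hcont3 : Continuous fun u : ℝ => Complex.exp (-(n:ℂ) * Complex.I * u) := by
    simpa [mul_assoc] using hcE (-(n:ℂ) * Complex.I)
  -- the three integrals
  have hI1 : (∫ u : ℝ in (-π)..π,
      Complex.exp (-(n:ℂ) * Complex.I * u) / (1 - (r:ℂ) * Complex.exp (Complex.I * u)))
      = if -n ≤ 0 then (r:ℂ)^(n.toNat) * (2*π) else 0 := by
    have h := geom_int r hr0.le hr1 (-n)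
    simp only [Int.cast_neg, neg_neg] at h
    exact h
  have hI2 : (∫ u : ℝ in (-π)..π,
      Complex.exp (-(n:ℂ) * Complex.I * u) / (1 - (r:ℂ) * Complex.exp (-(Complex.I * u))))
      = if n ≤ 0 then (r:ℂ)^((-n).toNat) * (2*π) else 0 := by
    have h := geom_int r hr0.le hr1 n
    have hflip := intervalIntegral.integral_comp_neg (a := -π) (b := π)
      (f := fun x : ℝ => Complex.exp ((n:ℂ) * Complex.I * x) / (1 - (r:ℂ) * Complex.exp (Complex.I * x)))
    rw [neg_neg] at hflip
    rw [← h, ← hflip]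
    apply intervalIntegral.integral_congr
    intro x _
    push_cast
    rw [show (n:ℂ) * Complex.I * (-(x:ℂ)) = -(n:ℂ) * Complex.I * x by ring,
        show Complex.I * (-(x:ℂ)) = -(Complex.I * x) by ring]
  have hI3 : (∫ u : ℝ in (-π)..π, Complex.exp (-(n:ℂ) * Complex.I * u))
      = if (-n : ℤ) = 0 then (2*π:ℂ) else 0 := by
    have h := int_char (-n)
    simp only [Int.cast_neg] at h
    exact h
  -- assemble
  have hsplit : (∫ u : ℝ in (-π)..π, Complex.exp (-(n:ℂ) * Complex.I * u) /
        (((r * Real.cos u - (1 + r^2)/2 : ℝ)) : ℂ))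
      = (-2/(1-(r:ℂ)^2)) *
        ((∫ u : ℝ in (-π)..π, Complex.exp (-(n:ℂ) * Complex.I * u) / (1 - (r:ℂ) * Complex.exp (Complex.I * u)))
          + (∫ u : ℝ in (-π)..π, Complex.exp (-(n:ℂ) * Complex.I * u) / (1 - (r:ℂ) * Complex.exp (-(Complex.I * u))))
          - ∫ u : ℝ in (-π)..π, Complex.exp (-(n:ℂ) * Complex.I * u)) := by
    have step : (∫ u : ℝ in (-π)..π, Complex.exp (-(n:ℂ) * Complex.I * u) /
        (((r * Real.cos u - (1 + r^2)/2 : ℝ)) : ℂ))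
        = ∫ u : ℝ in (-π)..π, (-2/(1-(r:ℂ)^2)) *
            (Complex.exp (-(n:ℂ) * Complex.I * u) / (1 - (r:ℂ) * Complex.exp (Complex.I * u))
              + Complex.exp (-(n:ℂ) * Complex.I * u) / (1 - (r:ℂ) * Complex.exp (-(Complex.I * u)))
              - Complex.exp (-(n:ℂ) * Complex.I * u)) :=
      intervalIntegral.integral_congr fun u _ => hpt u
    rw [step, intervalIntegral.integral_const_mul]
    congr 1
    rw [intervalIntegral.integral_sub, intervalIntegral.integral_add]
    · exact hcont1.intervalIntegrable _ _
    · exact hcont2.intervalIntegrable _ _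
    · exact (hcont1.add hcont2).intervalIntegrable _ _
    · exact hcont3.intervalIntegrable _ _
  rw [hsplit, hI1, hI2, hI3]
  congr 1
  rcases lt_trichotomy n 0 with hn | hn | hn
  · rw [if_neg (by omega), if_pos (by omega), if_neg (by omega)]
    rw [show (-n).toNat = n.natAbs by omega]
    ring
  · subst hn
    norm_num
  · rw [if_pos (by omega), if_neg (by omega), if_neg (by omega)]
    rw [show n.toNat = n.natAbs by omega]
    ring

/-- The Fourier multiplier integral:
`(-(1-ε)ε/π) ∫_{-π}^{π} e^{-inϑ} dϑ / ((1-2ε)cos(ϑ-ϑ_y) + 2(1-ε)ε - 1)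
 = (1-2ε)^{|n|} e^{-inϑ_y}`. -/
theorem stmt_7 (ε : ℝ) (hε : 0 < ε) (hε2 : ε < 1 / 2) (n : ℤ) (ϑy : ℝ) :
    ((-(1 - ε) * ε / Real.pi : ℝ) : ℂ) *
        ∫ ϑ in (-Real.pi)..Real.pi,
          Complex.exp (-(n : ℂ) * Complex.I * (ϑ : ℂ)) /
            ((((1 - 2 * ε) * Real.cos (ϑ - ϑy) + 2 * (1 - ε) * ε - 1 : ℝ)) : ℂ)
      = (((1 - 2 * ε) ^ n.natAbs : ℝ) : ℂ) * Complex.exp (-(n : ℂ) * Complex.I * (ϑy : ℂ)) := by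
  have hπ : (π:ℂ) ≠ 0 := Complex.ofReal_ne_zero.2 Real.pi_ne_zero
  set r : ℝ := 1 - 2*ε with hrdef
  have hr0 : 0 < r := by rw [hrdef]; linarith
  have hr1 : r < 1 := by rw [hrdef]; linarith
  have hr2 : (1:ℂ) - (r:ℂ)^2 ≠ 0 := by
    intro h
    have : ((1 - r^2 : ℝ) : ℂ) = 0 := by push_cast; linear_combination h
    rw [Complex.ofReal_eq_zero] at this
    nlinarith
  set f : ℝ → ℂ := fun u => Complex.exp (-(n:ℂ) * Complex.I * u) /
      (((r * Real.cos u - (1 + r^2)/2 : ℝ)) : ℂ) with hfdef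
  have hper : Function.Periodic f (2*π) := by
    intro u
    rw [hfdef]
    simp only
    rw [Real.cos_add_two_pi]
    have hx : Complex.exp (-(n:ℂ) * Complex.I * ((u + 2*π : ℝ):ℂ))
        = Complex.exp (-(n:ℂ) * Complex.I * (u:ℂ)) := by
      rw [show -(n:ℂ) * Complex.I * ((u + 2*π : ℝ):ℂ)
          = -(n:ℂ) * Complex.I * (u:ℂ) + (-n:ℤ) * (2*(π:ℂ)*Complex.I) by push_cast; ring,
        Complex.exp_add, Complex.exp_int_mul_two_pi_mul_I, mul_one]
    rw [hx]
  have hstep1 : (∫ ϑ in (-π)..π,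
        Complex.exp (-(n : ℂ) * Complex.I * (ϑ : ℂ)) /
          ((((1 - 2 * ε) * Real.cos (ϑ - ϑy) + 2 * (1 - ε) * ε - 1 : ℝ)) : ℂ))
      = Complex.exp (-(n:ℂ) * Complex.I * (ϑy:ℂ)) * ∫ u in (-π)..π, f u := by
    have h1 : (∫ ϑ in (-π)..π,
          Complex.exp (-(n : ℂ) * Complex.I * (ϑ : ℂ)) /
            ((((1 - 2 * ε) * Real.cos (ϑ - ϑy) + 2 * (1 - ε) * ε - 1 : ℝ)) : ℂ))
        = ∫ ϑ in (-π)..π, Complex.exp (-(n:ℂ) * Complex.I * (ϑy:ℂ)) * f (ϑ - ϑy) := by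
      apply intervalIntegral.integral_congr
      intro ϑ _
      have hdeq : ((1 - 2 * ε) * Real.cos (ϑ - ϑy) + 2 * (1 - ε) * ε - 1 : ℝ)
          = r * Real.cos (ϑ - ϑy) - (1 + r^2)/2 := by rw [hrdef]; ring
      have hnum : Complex.exp (-(n:ℂ) * Complex.I * (ϑ:ℂ))
          = Complex.exp (-(n:ℂ) * Complex.I * (ϑy:ℂ)) *
              Complex.exp (-(n:ℂ) * Complex.I * ((ϑ - ϑy : ℝ):ℂ)) := by
        rw [← Complex.exp_add]
        congr 1
        push_cast
        ring
      dsimp only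
      rw [hdeq, hfdef]
      dsimp only
      rw [hnum, mul_div_assoc]
    rw [h1, intervalIntegral.integral_const_mul]
    congr 1
    rw [intervalIntegral.integral_comp_sub_right f ϑy]
    have h2 := hper.intervalIntegral_add_eq (-π - ϑy) (-π)
    rw [show -π - ϑy + 2*π = π - ϑy by ring, show -π + 2*π = π by ring] at h2
    exact h2
  rw [hstep1, hfdef]
  rw [core r hr0 hr1 n]
  have hε1 : (0:ℝ) < 1 - ε := by linarith
  have hR : (1 - r^2) ≠ 0 := by nlinarith
  have hkeyR : (-(1 - ε) * ε / π) * (-2/(1-r^2) * (r^n.natAbs * (2*π))) = r^n.natAbs := by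
    field_simp
    rw [hrdef]
    ring
  have hkeyC := congrArg (fun t : ℝ => (t:ℂ)) hkeyR
  push_cast at hkeyC
  push_cast
  linear_combination Complex.exp (-(n:ℂ)*Complex.I*(ϑy:ℂ)) * hkeyC
end

section
/- For α = 1, the function v_{ε,1}(ρ) = ½(Li₂(1-2ε) - Li₂(1-2ρ)) satisfies the expansion v_{ε,1}(ρ) = ρ(-log ρ + 1 - log 2) + ε(log ε - 1 + log 2) + O(ρ² log ρ) + O(ε² log ε) as ρ, ε → 0, where Li₂ is the dilogarithm. In particular, for fixed ρ ∈ (0, 1/2), lim_{ε→0⁺} v_{ε,1}(ρ) = ½(Li₂(1) - Li₂(1-2ρ)) = ½(π²/6 - Li₂(1-2ρ)) is finite. -/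
/-- The dilogarithm Li₂(z) = Σ_{k≥1} zᵏ/k². -/
noncomputable def Li2 (z : ℝ) : ℝ := ∑' k : ℕ, z ^ (k + 1) / ((k : ℝ) + 1) ^ 2

/-- The exact mean escape time profile for the gas giant of order α = 1. -/
noncomputable def v1 (ε ρ : ℝ) : ℝ := (1 / 2) * (Li2 (1 - 2 * ε) - Li2 (1 - 2 * ρ))

lemma summable_sq : Summable (fun k : ℕ => 1 / ((k : ℝ) + 1) ^ 2) := by
  have h2 : HasSum (fun n : ℕ => (1:ℝ) / ((n:ℝ)+1) ^ 2) (Real.pi ^ 2 / 6) := by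
    have h2 := (hasSum_nat_add_iff' (f := fun n : ℕ => (1:ℝ)/(n:ℝ)^2) 1).mpr hasSum_zeta_two
    simp only [Finset.range_one, Finset.sum_singleton] at h2
    norm_num at h2
    convert h2 using 2 with n
    · rfl
    ring
  exact h2.summable

lemma Li2_summable {z : ℝ} (hz : |z| ≤ 1) :
    Summable (fun k : ℕ => z ^ (k + 1) / ((k : ℝ) + 1) ^ 2) := by
  refine Summable.of_norm_bounded summable_sq fun k => ?_
  have h1 : (0:ℝ) < ((k:ℝ)+1)^2 := by positivity
  rw [Real.norm_eq_abs, abs_div, abs_pow, abs_of_pos h1]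
  have : |z| ^ (k+1) ≤ 1 := pow_le_one₀ (abs_nonneg z) hz
  rw [div_le_div_iff₀ h1 h1]
  nlinarith

lemma Li2_hasDerivAt {z : ℝ} (hz : |z| < 1) (hz0 : z ≠ 0) :
    HasDerivAt Li2 (-Real.log (1 - z) / z) z := by
  set b : ℝ := (1 + |z|) / 2 with hb
  have habs : 0 ≤ |z| := abs_nonneg z
  have hb0 : 0 ≤ b := by positivity
  have hb1 : b < 1 := by rw [hb]; linarith
  have hzb : |z| < b := by rw [hb]; linarith
  have hmem : z ∈ Set.Ioo (-b) b := abs_lt.mp hzb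
  have key : HasDerivAt (fun y : ℝ => ∑' k : ℕ, y ^ (k + 1) / ((k : ℝ) + 1) ^ 2)
      (∑' k : ℕ, z ^ k / ((k : ℝ) + 1)) z := by
    refine hasDerivAt_tsum_of_isPreconnected (summable_geometric_of_lt_one hb0 hb1)
      isOpen_Ioo (convex_Ioo _ _).isPreconnected
      (g := fun (k : ℕ) (y : ℝ) => y ^ (k + 1) / ((k : ℝ) + 1) ^ 2)
      (g' := fun (k : ℕ) (y : ℝ) => y ^ k / ((k : ℝ) + 1))
      (fun k y _ => ?_) (fun k y hy => ?_) hmem (Li2_summable hz.le) hmem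
    · have h := (hasDerivAt_pow (k+1) y).div_const (((k:ℝ)+1)^2)
      convert h using 1
      · rfl
      have hk : ((k:ℝ)+1) ≠ 0 := by positivity
      push_cast
      field_simp
    · have hyb : |y| ≤ b := by
        rw [abs_le]; exact ⟨hy.1.le, hy.2.le⟩
      have hk1 : (1:ℝ) ≤ (k:ℝ)+1 := by exact_mod_cast Nat.succ_le_succ (Nat.zero_le k)
      rw [Real.norm_eq_abs, abs_div, abs_pow, abs_of_pos (by positivity : (0:ℝ) < (k:ℝ)+1)]
      calc |y| ^ k / ((k:ℝ)+1) ≤ |y| ^ k / 1 := by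
            apply div_le_div_of_nonneg_left (by positivity) one_pos hk1
        _ = |y| ^ k := div_one _
        _ ≤ b ^ k := pow_le_pow_left₀ (abs_nonneg y) hyb k
  have hsum : (∑' k : ℕ, z ^ k / ((k : ℝ) + 1)) = -Real.log (1 - z) / z := by
    have h := (Real.hasSum_pow_div_log_of_abs_lt_one hz).div_const z
    have heq : (fun n : ℕ => z ^ (n+1) / ((n:ℝ)+1) / z) = fun n : ℕ => z ^ n / ((n:ℝ)+1) := by
      funext n
      have hk : ((n:ℝ)+1) ≠ 0 := by positivity
      field_simp
      ring
    rw [heq] at h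
    exact h.tsum_eq
  rw [hsum] at key
  exact key

lemma Li2_one : Li2 1 = Real.pi ^ 2 / 6 := by
  have h2 : HasSum (fun n : ℕ => (1:ℝ) / ((n:ℝ)+1) ^ 2) (Real.pi ^ 2 / 6) := by
    have h2 := (hasSum_nat_add_iff' (f := fun n : ℕ => (1:ℝ)/(n:ℝ)^2) 1).mpr hasSum_zeta_two
    simp only [Finset.range_one, Finset.sum_singleton] at h2
    norm_num at h2
    convert h2 using 2 with n
    · rfl
    ring
  rw [Li2, ← h2.tsum_eq]
  simp

lemma Li2_continuousOn : ContinuousOn Li2 (Set.Icc (-1:ℝ) 1) := by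
  have : ContinuousOn (fun z : ℝ => ∑' k : ℕ, z ^ (k + 1) / ((k : ℝ) + 1) ^ 2)
      (Set.Icc (-1:ℝ) 1) := by
    refine continuousOn_tsum (fun k => ?_) summable_sq (fun k x hx => ?_)
    · exact (continuousOn_pow (k+1)).div_const _
    · have hx1 : |x| ≤ 1 := abs_le.mpr ⟨hx.1, hx.2⟩
      have h1 : (0:ℝ) < ((k:ℝ)+1)^2 := by positivity
      rw [Real.norm_eq_abs, abs_div, abs_pow, abs_of_pos h1]
      have : |x| ^ (k+1) ≤ 1 := pow_le_one₀ (abs_nonneg x) hx1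
      rw [div_le_div_iff₀ h1 h1]
      nlinarith
  exact this

lemma neg_mul_log_mono {a b : ℝ} (ha : 0 < a) (hab : a ≤ b) (hb : b ≤ 1/8) :
    -(a * Real.log a) ≤ -(b * Real.log b) := by
  have hmono : MonotoneOn (fun x : ℝ => -(x * Real.log x)) (Set.Icc a b) := by
    apply monotoneOn_of_deriv_nonneg (convex_Icc a b)
    · apply ContinuousOn.neg
      exact continuousOn_id.mul (Real.continuousOn_log.mono
        (fun x hx => by simp only [Set.mem_compl_iff, Set.mem_singleton_iff]
                        exact ne_of_gt (lt_of_lt_of_le ha hx.1)))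
    · intro x hx
      rw [interior_Icc] at hx
      have hx0 : x ≠ 0 := ne_of_gt (lt_trans ha hx.1)
      exact ((Real.hasDerivAt_mul_log hx0).neg).differentiableAt.differentiableWithinAt
    · intro x hx
      rw [interior_Icc] at hx
      have hx0 : 0 < x := lt_trans ha hx.1
      rw [show deriv (fun x => -(x * Real.log x)) x = -(Real.log x + 1) from
        ((Real.hasDerivAt_mul_log hx0.ne').neg).deriv]
      have hlog : Real.log x ≤ -1 := by
        rw [Real.log_le_iff_le_exp hx0]
        have h8 : Real.exp 1 < 8 := lt_trans Real.exp_one_lt_d9 (by norm_num)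
        have : Real.exp (-1) = 1 / Real.exp 1 := by rw [Real.exp_neg]; ring
        rw [this]
        have he : 0 < Real.exp 1 := Real.exp_pos 1
        have h18 : (8:ℝ)⁻¹ ≤ (Real.exp 1)⁻¹ := inv_anti₀ he h8.le
        have hx8 : x ≤ 1/8 := le_trans hx.2.le hb
        rw [one_div]
        calc x ≤ 1/8 := hx8
          _ = (8:ℝ)⁻¹ := by norm_num
          _ ≤ (Real.exp 1)⁻¹ := h18
      linarith
  exact hmono (Set.left_mem_Icc.mpr hab) (Set.right_mem_Icc.mpr hab) hab

lemma h_hasDerivAt {t : ℝ} (ht : 0 < t) :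
    HasDerivAt (fun t : ℝ => t * (-Real.log t + 1 - Real.log 2)) (-Real.log (2*t)) t := by
  have heq : (fun t : ℝ => t * (-Real.log t + 1 - Real.log 2))
      = fun t : ℝ => -(t * Real.log t) + (1 - Real.log 2) * t := by
    funext s; ring
  rw [heq]
  have h1 := (Real.hasDerivAt_mul_log ht.ne').neg
  have h2 := (hasDerivAt_id t).const_mul (1 - Real.log 2)
  have h := h1.add h2
  convert h using 1
  · rfl
  · rfl
  · rfl
  rw [Real.log_mul two_ne_zero ht.ne']
  ring

lemma g_hasDerivAt {t : ℝ} (ht : 0 < t) (ht2 : t < 1/2) :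
    HasDerivAt (fun t : ℝ => Li2 (1 - 2*t)) (2 * Real.log (2*t) / (1 - 2*t)) t := by
  have hz : |1 - 2*t| < 1 := by rw [abs_lt]; constructor <;> linarith
  have hz0 : (1 - 2*t) ≠ 0 := by intro h; nlinarith [h]
  have hinner : HasDerivAt (fun t : ℝ => 1 - 2*t) (-(2*1)) t :=
    ((hasDerivAt_id t).const_mul 2).const_sub 1
  have h := (Li2_hasDerivAt hz hz0).comp t hinner
  have : -Real.log (1 - (1 - 2*t)) / (1 - 2*t) * (-(2*1)) = 2 * Real.log (2*t) / (1 - 2*t) := by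
    have : 1 - (1 - 2*t) = 2*t := by ring
    rw [this]; ring
  rw [this] at h
  exact h

lemma main_est (ρ ε : ℝ) (hε : 0 < ε) (hερ : ε ≤ ρ) (hρ8 : ρ ≤ 1/8) :
    |v1 ε ρ - (ρ * (-Real.log ρ + 1 - Real.log 2) + ε * (Real.log ε - 1 + Real.log 2))|
      ≤ 3 * ρ ^ 2 * |Real.log ρ| + 3 * ε ^ 2 * |Real.log ε| := by
  have hρ0 : 0 < ρ := lt_of_lt_of_le hε hερ
  have huIcc : Set.uIcc ε ρ = Set.Icc ε ρ := Set.uIcc_of_le hερ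
  have hmem : ∀ t ∈ Set.Icc ε ρ, 0 < t ∧ t < 1/2 := fun t ht =>
    ⟨lt_of_lt_of_le hε ht.1, by have := ht.2; linarith⟩
  set φ1 : ℝ → ℝ := fun t => 2 * Real.log (2*t) / (1 - 2*t) with hφ1
  set hd : ℝ → ℝ := fun t => -Real.log (2*t) with hhd
  set φ : ℝ → ℝ := fun t => -Real.log (2*t) * (2*t/(1-2*t)) with hφ
  have contlog : ContinuousOn (fun t : ℝ => Real.log (2*t)) (Set.Icc ε ρ) := by
    apply Real.continuousOn_log.comp ((continuous_const.mul continuous_id).continuousOn)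
    intro x hx
    have := (hmem x hx).1
    simp only [Set.mem_compl_iff, Set.mem_singleton_iff, Pi.mul_apply, id]
    positivity
  have cont1 : ContinuousOn φ1 (Set.Icc ε ρ) := by
    apply (continuousOn_const.mul contlog).div
      ((continuous_const.sub (continuous_const.mul continuous_id)).continuousOn)
    intro x hx
    have := (hmem x hx).2
    simp only [Pi.sub_apply, Pi.mul_apply, id]
    intro h
    nlinarith
  have cont2 : ContinuousOn hd (Set.Icc ε ρ) := contlog.neg
  have int1 : IntervalIntegrable φ1 MeasureTheory.volume ε ρ :=
    (huIcc ▸ cont1).intervalIntegrable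
  have int2 : IntervalIntegrable hd MeasureTheory.volume ε ρ :=
    (huIcc ▸ cont2).intervalIntegrable
  have ftc1 : (∫ t in ε..ρ, φ1 t) = Li2 (1-2*ρ) - Li2 (1-2*ε) := by
    apply intervalIntegral.integral_eq_sub_of_hasDerivAt (fun t ht => ?_) int1
    obtain ⟨h1, h2⟩ := hmem t (huIcc ▸ ht)
    exact g_hasDerivAt h1 h2
  have ftc2 : (∫ t in ε..ρ, hd t)
      = ρ * (-Real.log ρ + 1 - Real.log 2) - ε * (-Real.log ε + 1 - Real.log 2) := by
    apply intervalIntegral.integral_eq_sub_of_hasDerivAt (fun t ht => ?_) int2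
    exact h_hasDerivAt (hmem t (huIcc ▸ ht)).1
  have hφeq : Set.EqOn φ (fun t => -(1/2) * φ1 t - hd t) (Set.uIcc ε ρ) := by
    intro t ht
    rw [huIcc] at ht
    have h1 := (hmem t ht).1
    have h2 := (hmem t ht).2
    have hne : 1 - 2*t ≠ 0 := by intro h; nlinarith
    simp only [hφ, hφ1, hhd]
    field_simp
    ring
  have key : v1 ε ρ - (ρ * (-Real.log ρ + 1 - Real.log 2)
      + ε * (Real.log ε - 1 + Real.log 2)) = ∫ t in ε..ρ, φ t := by
    rw [intervalIntegral.integral_congr hφeq,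
      intervalIntegral.integral_sub (int1.const_mul (-(1/2))) int2]
    have : (∫ t in ε..ρ, -(1/2) * φ1 t) = -(1/2) * ∫ t in ε..ρ, φ1 t :=
      intervalIntegral.integral_const_mul _ _
    rw [this, ftc1, ftc2]
    simp only [v1]
    ring
  have hbound : ∀ x ∈ Set.uIoc ε ρ, ‖φ x‖ ≤ 3 * (ρ * (-Real.log ρ)) := by
    intro x hx
    rw [Set.uIoc_of_le hερ] at hx
    have hx0 : 0 < x := lt_trans hε hx.1
    have hx8 : x ≤ 1/8 := le_trans hx.2 hρ8
    have h12 : 0 < 1 - 2*x := by linarith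
    have hlogneg : Real.log (2*x) < 0 := Real.log_neg (by linarith) (by linarith)
    have hA : -Real.log (2*x) ≤ -Real.log x := by
      rw [Real.log_mul two_ne_zero hx0.ne']
      have : 0 ≤ Real.log 2 := Real.log_nonneg one_le_two
      linarith
    have hA0 : 0 ≤ -Real.log (2*x) := by linarith
    have hB : 2*x/(1-2*x) ≤ (8/3)*x := by
      rw [div_le_iff₀ h12]
      nlinarith
    have hB0 : 0 ≤ 2*x/(1-2*x) := by positivity
    have hlogx0 : 0 ≤ -Real.log x := by
      have := Real.log_nonpos hx0.le (by linarith : x ≤ 1)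
      linarith
    have step1 : φ x ≤ (-Real.log x) * ((8/3)*x) := by
      simp only [hφ]
      exact mul_le_mul hA hB hB0 hlogx0
    have step2 : (-Real.log x) * ((8/3)*x) = (8/3) * (-(x * Real.log x)) := by ring
    have step3 : -(x * Real.log x) ≤ -(ρ * Real.log ρ) := neg_mul_log_mono hx0 hx.2 hρ8
    have hρlog : 0 ≤ -(ρ * Real.log ρ) := by
      have := Real.log_nonpos hρ0.le (by linarith : ρ ≤ 1)
      nlinarith
    have hφ0 : 0 ≤ φ x := by
      simp only [hφ]
      exact mul_nonneg hA0 hB0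
    rw [Real.norm_eq_abs, abs_of_nonneg hφ0]
    calc φ x ≤ (-Real.log x) * ((8/3)*x) := step1
      _ = (8/3) * (-(x * Real.log x)) := step2
      _ ≤ (8/3) * (-(ρ * Real.log ρ)) := by linarith
      _ ≤ 3 * (ρ * (-Real.log ρ)) := by nlinarith
  have hnorm := intervalIntegral.norm_integral_le_of_norm_le_const hbound
  rw [← key] at hnorm
  have hlogρ : |Real.log ρ| = -Real.log ρ :=
    abs_of_nonpos (Real.log_nonpos hρ0.le (by linarith : ρ ≤ 1))
  have habs : |ρ - ε| = ρ - ε := abs_of_nonneg (by linarith)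
  rw [Real.norm_eq_abs, habs] at hnorm
  have hεterm : 0 ≤ 3 * ε ^ 2 * |Real.log ε| := by positivity
  have hlogρ0 : 0 ≤ -Real.log ρ := by rw [← hlogρ]; exact abs_nonneg _
  calc |v1 ε ρ - (ρ * (-Real.log ρ + 1 - Real.log 2) + ε * (Real.log ε - 1 + Real.log 2))|
      ≤ 3 * (ρ * (-Real.log ρ)) * (ρ - ε) := hnorm
    _ ≤ 3 * ρ ^ 2 * |Real.log ρ| := by
        rw [hlogρ]
        nlinarith [mul_le_mul_of_nonneg_left (show ρ - ε ≤ ρ by linarith)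
          (mul_nonneg (mul_nonneg (by norm_num : (0:ℝ) ≤ 3) hρ0.le) hlogρ0)]
    _ ≤ 3 * ρ ^ 2 * |Real.log ρ| + 3 * ε ^ 2 * |Real.log ε| := by linarith

lemma part2 (ρ : ℝ) (hρ : 0 < ρ) (hρ' : ρ < 1 / 2) :
    Filter.Tendsto (fun ε => v1 ε ρ) (nhdsWithin 0 (Set.Ioi 0))
      (nhds ((1 / 2) * (Real.pi ^ 2 / 6 - Li2 (1 - 2 * ρ)))) := by
  have hc : ContinuousWithinAt Li2 (Set.Icc (-1:ℝ) 1) 1 :=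
    Li2_continuousOn 1 (by norm_num)
  have hmap : Filter.Tendsto (fun ε : ℝ => 1 - 2*ε) (nhdsWithin 0 (Set.Ioi 0))
      (nhdsWithin 1 (Set.Icc (-1:ℝ) 1)) := by
    rw [tendsto_nhdsWithin_iff]
    constructor
    · have : Filter.Tendsto (fun ε : ℝ => 1 - 2*ε) (nhds 0) (nhds (1 - 2*0)) :=
        (continuous_const.sub (continuous_const.mul continuous_id)).tendsto 0
      simpa using this.mono_left nhdsWithin_le_nhds
    · filter_upwards [Ioo_mem_nhdsGT (show (0:ℝ) < 1 from one_pos)]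
        with x hx
      constructor <;> [linarith [hx.1, hx.2]; linarith [hx.1]]
  have h1 : Filter.Tendsto (fun ε : ℝ => Li2 (1 - 2*ε)) (nhdsWithin 0 (Set.Ioi 0))
      (nhds (Real.pi ^ 2 / 6)) := by
    have := hc.tendsto.comp hmap
    rwa [Li2_one] at this
  have := (h1.sub_const (Li2 (1 - 2*ρ))).const_mul (1/2 : ℝ)
  simpa [v1] using this


/-- Expansion of v_{ε,1} near ρ, ε = 0 and the finite limit ½(π²/6 - Li₂(1-2ρ))
as ε → 0⁺ for fixed ρ ∈ (0,1/2). -/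
theorem stmt_14 :
    (∃ C r : ℝ, 0 < C ∧ 0 < r ∧ ∀ ρ ε : ℝ, 0 < ε → ε ≤ ρ → ρ ≤ r →
      |v1 ε ρ - (ρ * (-Real.log ρ + 1 - Real.log 2)
          + ε * (Real.log ε - 1 + Real.log 2))|
        ≤ C * ρ ^ 2 * |Real.log ρ| + C * ε ^ 2 * |Real.log ε|) ∧
    (∀ ρ : ℝ, 0 < ρ → ρ < 1 / 2 →
      Filter.Tendsto (fun ε => v1 ε ρ) (nhdsWithin 0 (Set.Ioi 0))
        (nhds ((1 / 2) * (Real.pi ^ 2 / 6 - Li2 (1 - 2 * ρ))))) := by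
  constructor
  · exact ⟨3, 1/8, by norm_num, by norm_num, fun ρ ε hε hερ hρ8 => main_est ρ ε hε hερ hρ8⟩
  · exact part2
end
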